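/- arXiv:0804.0436 — 2 statements merged into one kernel-verified Lean document; each statement's English description precedes it below -/
import Mathlib

section
/- Let (Ψ₁,Ψ₂,Ψ₃) be the standard paraquaternionic structure on V, let κ₀ ∈ ℝ and ξᵢⱼ ∈ ℝ (1 ≤ i ≤ j ≤ 3), and let A_{κ₀,ξ} = κ₀A⁰ + (1/3)(ξ₁₁A^{Ψ₁} + ξ₂₂A^{Ψ₂} + ξ₃₃A^{Ψ₃} + ξ₁₂A^{Ψ₁+Ψ₂} + ξ₁₃A^{Ψ₁+Ψ₃} + ξ₂₃A^{Ψ₂+Ψ₃}). Then the model 𝔐_{κ₀,ξ} = (V,⟨·,·⟩,A_{κ₀,ξ}) is both spacelike Jordan Osserman and timelike Jordan Osserman. -/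
open Matrix BigOperators

/-- `V = ℝ⁴`. -/
abbrev V4 : Type := Fin 4 → ℝ

/-- The neutral inner product of signature (2,2):
`⟨x,y⟩ = −x₁y₁ − x₂y₂ + x₃y₃ + x₄y₄`. -/
def nip (x y : V4) : ℝ := -(x 0 * y 0) - x 1 * y 1 + x 2 * y 2 + x 3 * y 3

/-- The signs `ε₁ = ε₂ = −1`, `ε₃ = ε₄ = 1`. -/
def eps : Fin 4 → ℝ := ![-1, -1, 1, 1]

/-- The standard basis vectors `e i`. -/
def stdb (i : Fin 4) : V4 := fun j => if j = i then 1 else 0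

/-- A 4-linear map `A : V⁴ → ℝ` (linearity in each slot). -/
def IsMultilinear (A : V4 → V4 → V4 → V4 → ℝ) : Prop :=
  (∀ (c : ℝ) (x x' y z w : V4), A (c • x + x') y z w = c * A x y z w + A x' y z w) ∧
  (∀ (c : ℝ) (x y y' z w : V4), A x (c • y + y') z w = c * A x y z w + A x y' z w) ∧
  (∀ (c : ℝ) (x y z z' w : V4), A x y (c • z + z') w = c * A x y z w + A x y z' w) ∧
  (∀ (c : ℝ) (x y z w w' : V4), A x y z (c • w + w') = c * A x y z w + A x y z w')

/-- Curvature symmetries: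
`A(x,y,z,v) = −A(y,x,z,v) = A(z,v,x,y)` and the first Bianchi identity. -/
def HasCurvSym (A : V4 → V4 → V4 → V4 → ℝ) : Prop :=
  (∀ x y z w, A x y z w = - A y x z w) ∧
  (∀ x y z w, A x y z w = A z w x y) ∧
  (∀ x y z w, A x y z w + A y z x w + A z x y w = 0)

/-- An algebraic curvature tensor on `(V,⟨·,·⟩)`. -/
def IsModel (A : V4 → V4 → V4 → V4 → ℝ) : Prop := IsMultilinear A ∧ HasCurvSym A

/-- The Jacobi operator `J_A(x)`, as a matrix: it is the unique linear map with
`⟨J_A(x)y, z⟩ = A(y,x,x,z)`; its matrix entries are `J i j = ε i * A(e j, x, x, e i)`. -/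
def jacobi (A : V4 → V4 → V4 → V4 → ℝ) (x : V4) : Matrix (Fin 4) (Fin 4) ℝ :=
  Matrix.of fun i j => eps i * A (stdb j) x x (stdb i)

/-- Two endomorphisms of `V` are similar (conjugate by an invertible linear map). -/
def SimilarMat4 (M N : Matrix (Fin 4) (Fin 4) ℝ) : Prop :=
  ∃ L : Matrix (Fin 4) (Fin 4) ℝ, IsUnit L.det ∧ M * L = L * N

/-- Spacelike Osserman: the characteristic polynomial of `J_A` is constant on
unit spacelike vectors. -/
def SpacelikeOsserman (A : V4 → V4 → V4 → V4 → ℝ) : Prop :=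
  ∀ u w : V4, nip u u = 1 → nip w w = 1 → (jacobi A u).charpoly = (jacobi A w).charpoly

/-- Timelike Osserman: the characteristic polynomial of `J_A` is constant on
unit timelike vectors. -/
def TimelikeOsserman (A : V4 → V4 → V4 → V4 → ℝ) : Prop :=
  ∀ u w : V4, nip u u = -1 → nip w w = -1 → (jacobi A u).charpoly = (jacobi A w).charpoly

/-- Null Osserman: `J_A(v)` is nilpotent for every null vector `v`. -/
def NullOsserman (A : V4 → V4 → V4 → V4 → ℝ) : Prop :=
  ∀ v : V4, nip v v = 0 → IsNilpotent (jacobi A v)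

/-- Spacelike Jordan Osserman: the Jordan normal form of `J_A` is constant on
unit spacelike vectors. -/
def SpacelikeJordanOsserman (A : V4 → V4 → V4 → V4 → ℝ) : Prop :=
  ∀ u w : V4, nip u u = 1 → nip w w = 1 → SimilarMat4 (jacobi A u) (jacobi A w)

/-- Timelike Jordan Osserman. -/
def TimelikeJordanOsserman (A : V4 → V4 → V4 → V4 → ℝ) : Prop :=
  ∀ u w : V4, nip u u = -1 → nip w w = -1 → SimilarMat4 (jacobi A u) (jacobi A w)

/-- Null Jordan Osserman: the Jordan normal form of `J_A` is constant on
nonzero null vectors. -/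
def NullJordanOsserman (A : V4 → V4 → V4 → V4 → ℝ) : Prop :=
  ∀ u w : V4, u ≠ 0 → w ≠ 0 → nip u u = 0 → nip w w = 0 →
    SimilarMat4 (jacobi A u) (jacobi A w)

/-- The Ricci tensor `ρ_A(x,y) = Σᵢ εᵢ A(eᵢ,x,y,eᵢ)`. -/
def ricci (A : V4 → V4 → V4 → V4 → ℝ) (x y : V4) : ℝ :=
  ∑ i : Fin 4, eps i * A (stdb i) x y (stdb i)

/-- Einstein: `ρ_A = c⟨·,·⟩`. -/
def Einstein (A : V4 → V4 → V4 → V4 → ℝ) : Prop :=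
  ∃ c : ℝ, ∀ x y : V4, ricci A x y = c * nip x y

/-- The scalar curvature `τ_A = Σᵢ εᵢ ρ_A(eᵢ,eᵢ)`. -/
def scal (A : V4 → V4 → V4 → V4 → ℝ) : ℝ :=
  ∑ i : Fin 4, eps i * ricci A (stdb i) (stdb i)

/-- The Weyl tensor. -/
noncomputable def weyl (A : V4 → V4 → V4 → V4 → ℝ) (x y z v : V4) : ℝ :=
  A x y z v + (scal A / 6) * (nip y z * nip x v - nip x z * nip y v)
    - (1/2) * (ricci A y z * nip x v - ricci A x z * nip y v
        + ricci A x v * nip y z - ricci A y v * nip x z)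

/-- A 2-vector `x ∧ y`, represented by its antisymmetric coefficient matrix. -/
def wedge (x y : V4) : Matrix (Fin 4) (Fin 4) ℝ :=
  Matrix.of fun i j => x i * y j - x j * y i

/-- The Weyl tensor as a symmetric bilinear form on 2-vectors, determined by
`W_A(x∧y, z∧v) = W_A(x,y,z,v)`. -/
noncomputable def weylForm (A : V4 → V4 → V4 → V4 → ℝ) (α β : Matrix (Fin 4) (Fin 4) ℝ) : ℝ :=
  (1/4) * ∑ i : Fin 4, ∑ j : Fin 4, ∑ k : Fin 4, ∑ l : Fin 4,
    α i j * β k l * weyl A (stdb i) (stdb j) (stdb k) (stdb l)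

/-- `E₁^ε = (1/√2)(e₁∧e₂ + ε e₃∧e₄)`, `E₂^ε = (1/√2)(e₁∧e₃ + ε e₂∧e₄)`,
`E₃^ε = (1/√2)(e₁∧e₄ − ε e₂∧e₃)`.  For `ε = 1` this is the standard basis of the
self-dual 2-vectors `Λ⁺`; for `ε = −1`, of the anti-self-dual 2-vectors `Λ⁻`. -/
noncomputable def Evec (ε : ℝ) : Fin 3 → Matrix (Fin 4) (Fin 4) ℝ :=
  ![(Real.sqrt 2)⁻¹ • (wedge (stdb 0) (stdb 1) + ε • wedge (stdb 2) (stdb 3)),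
    (Real.sqrt 2)⁻¹ • (wedge (stdb 0) (stdb 2) + ε • wedge (stdb 1) (stdb 3)),
    (Real.sqrt 2)⁻¹ • (wedge (stdb 0) (stdb 3) - ε • wedge (stdb 1) (stdb 2))]

/-- The space `Λ⁺` of self-dual 2-vectors. -/
def LambdaPlus : Submodule ℝ (Matrix (Fin 4) (Fin 4) ℝ) :=
  Submodule.span ℝ (Set.range (Evec 1))

/-- The space `Λ⁻` of anti-self-dual 2-vectors. -/
def LambdaMinus : Submodule ℝ (Matrix (Fin 4) (Fin 4) ℝ) :=
  Submodule.span ℝ (Set.range (Evec (-1)))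

/-- Self-dual: the Weyl form vanishes identically on `Λ⁻`. -/
def SelfDual (A : V4 → V4 → V4 → V4 → ℝ) : Prop :=
  ∀ α ∈ LambdaMinus, ∀ β ∈ LambdaMinus, weylForm A α β = 0

/-- Anti-self-dual: the Weyl form vanishes identically on `Λ⁺`. -/
def AntiSelfDual (A : V4 → V4 → V4 → V4 → ℝ) : Prop :=
  ∀ α ∈ LambdaPlus, ∀ β ∈ LambdaPlus, weylForm A α β = 0

/-- The curvature tensor `A⁰` of constant sectional curvature `+1`. -/
def Acurv0 (x y z v : V4) : ℝ := nip y z * nip x v - nip x z * nip y v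

/-- The curvature tensor `A^Ψ` of a skew-adjoint endomorphism `Ψ`. -/
def AcurvPsi (Ψ : Matrix (Fin 4) (Fin 4) ℝ) (x y z v : V4) : ℝ :=
  nip (Ψ.mulVec y) z * nip (Ψ.mulVec x) v - nip (Ψ.mulVec x) z * nip (Ψ.mulVec y) v
    - 2 * nip (Ψ.mulVec x) y * nip (Ψ.mulVec z) v

/-- Skew-adjoint with respect to the neutral inner product. -/
def SkewAdjointM (Ψ : Matrix (Fin 4) (Fin 4) ℝ) : Prop :=
  ∀ x y : V4, nip (Ψ.mulVec x) y = - nip x (Ψ.mulVec y)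

/-- An orthogonal complex structure: skew-adjoint with `J² = −id`. -/
def OrthComplexStructure (J : Matrix (Fin 4) (Fin 4) ℝ) : Prop :=
  SkewAdjointM J ∧ J * J = -1

/-- An adapted paracomplex structure: skew-adjoint with `P² = id`. -/
def AdaptedParaStructure (P : Matrix (Fin 4) (Fin 4) ℝ) : Prop :=
  SkewAdjointM P ∧ P * P = 1

/-- A paraquaternionic structure. -/
def Paraquaternionic (P₁ P₂ P₃ : Matrix (Fin 4) (Fin 4) ℝ) : Prop :=
  SkewAdjointM P₁ ∧ SkewAdjointM P₂ ∧ SkewAdjointM P₃ ∧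
  P₁ * P₁ = -1 ∧ P₂ * P₂ = 1 ∧ P₃ * P₃ = 1 ∧
  P₁ * P₂ + P₂ * P₁ = 0 ∧ P₁ * P₃ + P₃ * P₁ = 0 ∧ P₂ * P₃ + P₃ * P₂ = 0

/-- The standard paraquaternionic structure: `Ψ₁`. -/
def psi1 : Matrix (Fin 4) (Fin 4) ℝ :=
  !![0, 1, 0, 0; -1, 0, 0, 0; 0, 0, 0, -1; 0, 0, 1, 0]

/-- The standard paraquaternionic structure: `Ψ₂`. -/
def psi2 : Matrix (Fin 4) (Fin 4) ℝ :=
  !![0, 0, 1, 0; 0, 0, 0, 1; 1, 0, 0, 0; 0, 1, 0, 0]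

/-- The standard paraquaternionic structure: `Ψ₃`. -/
def psi3 : Matrix (Fin 4) (Fin 4) ℝ :=
  !![0, 0, 0, 1; 0, 0, -1, 0; 0, -1, 0, 0; 1, 0, 0, 0]

/-- The curvature tensor `A_{κ₀,ξ}` of the Gilkey–Ivanova ansatz. -/
noncomputable def AKxi (κ₀ ξ11 ξ12 ξ13 ξ22 ξ23 ξ33 : ℝ) : V4 → V4 → V4 → V4 → ℝ :=
  fun x y z w =>
    κ₀ * Acurv0 x y z w + (1/3) *
      (ξ11 * AcurvPsi psi1 x y z w + ξ22 * AcurvPsi psi2 x y z w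
        + ξ33 * AcurvPsi psi3 x y z w + ξ12 * AcurvPsi (psi1 + psi2) x y z w
        + ξ13 * AcurvPsi (psi1 + psi3) x y z w + ξ23 * AcurvPsi (psi2 + psi3) x y z w)

/-- The `3 × 3` matrix `𝒥_{κ₀,ξ}`. -/
def Jmat (κ₀ ξ11 ξ12 ξ13 ξ22 ξ23 ξ33 : ℝ) : Matrix (Fin 3) (Fin 3) ℝ :=
  κ₀ • (1 : Matrix (Fin 3) (Fin 3) ℝ) +
    !![ξ11 + ξ12 + ξ13, -ξ12, -ξ13;
       ξ12, -ξ22 - ξ12 - ξ23, -ξ23;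
       ξ13, -ξ23, -ξ33 - ξ13 - ξ23]

/-- An oriented orthonormal basis of `(V,⟨·,·⟩)`: `b₁, b₂` timelike, `b₃, b₄` spacelike,
mutually orthogonal, with positively-oriented change-of-basis matrix. -/
def OrientedONB (b : Fin 4 → V4) : Prop :=
  (∀ i j : Fin 4, nip (b i) (b j) = if i = j then eps i else 0) ∧
  0 < (Matrix.of fun i j : Fin 4 => b j i).det


/-- Columns: `x, Ψ₁x, Ψ₂x, Ψ₃x`. -/
def Bmx (x : V4) : Matrix (Fin 4) (Fin 4) ℝ :=
  !![x 0, x 1, x 2, x 3;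
     x 1, -x 0, x 3, -x 2;
     x 2, -x 3, x 0, -x 1;
     x 3, x 2, x 1, x 0]

/-- The matrix of `J(x)` in the moving basis (`q = ⟨x,x⟩`). -/
def Cmx (q k a11 a12 a13 a22 a23 a33 : ℝ) : Matrix (Fin 4) (Fin 4) ℝ :=
  !![0, 0, 0, 0;
     0, q*(k+a11+a12+a13), -(q*a12), -(q*a13);
     0, q*a12, q*(k-a22-a12-a23), -(q*a23);
     0, q*a13, -(q*a23), q*(k-a33-a13-a23)]

set_option maxHeartbeats 2000000 in
lemma jacobi_Bmx (k a11 a12 a13 a22 a23 a33 : ℝ) (x : V4) :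
    jacobi (AKxi k a11 a12 a13 a22 a23 a33) x * Bmx x
      = Bmx x * Cmx (nip x x) k a11 a12 a13 a22 a23 a33 := by
  ext i j
  fin_cases i <;> fin_cases j <;>
    · simp [Matrix.mul_apply, Fin.sum_univ_four, jacobi, Bmx, Cmx, AKxi, Acurv0, AcurvPsi,
        nip, stdb, eps, psi1, psi2, psi3, Matrix.mulVec, dotProduct,
        Matrix.cons_val_zero, Matrix.cons_val_one]
      ring

lemma det_Bmx (x : V4) : (Bmx x).det = -(nip x x)^2 := by
  have h1 : (Fin.succAbove 1 2 : Fin 4) = 3 := by decide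
  have h2 : (Fin.succAbove 2 2 : Fin 4) = 3 := by decide
  have h3 : (Fin.succAbove 3 2 : Fin 4) = 2 := by decide
  simp [Bmx, Matrix.det_succ_row_zero, Fin.sum_univ_succ, Matrix.det_fin_three, nip, h1, h2, h3]
  ring

lemma isUnit_det_Bmx (x : V4) (e : ℝ) (he : e = 1 ∨ e = -1) (hx : nip x x = e) :
    IsUnit (Bmx x).det := by
  rw [det_Bmx, hx]
  rcases he with h | h <;> rw [h] <;> norm_num

lemma sim_of_conj (J J' B B' C : Matrix (Fin 4) (Fin 4) ℝ)
    (hB : IsUnit B.det) (hB' : IsUnit B'.det)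
    (h : J * B = B * C) (h' : J' * B' = B' * C) : SimilarMat4 J J' := by
  refine ⟨B * B'⁻¹, ?_, ?_⟩
  · rw [Matrix.det_mul]
    exact hB.mul (Matrix.isUnit_nonsing_inv_det B' hB')
  · have hinv : B'⁻¹ * J' = C * B'⁻¹ := by
      calc B'⁻¹ * J' = B'⁻¹ * J' * (B' * B'⁻¹) := by
            rw [Matrix.mul_nonsing_inv B' hB', mul_one]
        _ = B'⁻¹ * (J' * B') * B'⁻¹ := by noncomm_ring
        _ = B'⁻¹ * (B' * C) * B'⁻¹ := by rw [h']
        _ = (B'⁻¹ * B') * (C * B'⁻¹) := by noncomm_ring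
        _ = C * B'⁻¹ := by rw [Matrix.nonsing_inv_mul B' hB', one_mul]
    calc J * (B * B'⁻¹) = (J * B) * B'⁻¹ := by noncomm_ring
      _ = B * (C * B'⁻¹) := by rw [h]; noncomm_ring
      _ = B * (B'⁻¹ * J') := by rw [hinv]
      _ = (B * B'⁻¹) * J' := by noncomm_ring

lemma sim_of_eps (k a11 a12 a13 a22 a23 a33 : ℝ) (e : ℝ) (he : e = 1 ∨ e = -1)
    (u w : V4) (hu : nip u u = e) (hw : nip w w = e) :
    SimilarMat4 (jacobi (AKxi k a11 a12 a13 a22 a23 a33) u)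
      (jacobi (AKxi k a11 a12 a13 a22 a23 a33) w) := by
  refine sim_of_conj _ _ (Bmx u) (Bmx w) (Cmx e k a11 a12 a13 a22 a23 a33)
    (isUnit_det_Bmx u e he hu) (isUnit_det_Bmx w e he hw) ?_ ?_
  · have h := jacobi_Bmx k a11 a12 a13 a22 a23 a33 u
    rwa [hu] at h
  · have h := jacobi_Bmx k a11 a12 a13 a22 a23 a33 w
    rwa [hw] at h

/-- Lemma 3.1 (2): the model `𝔐_{κ₀,ξ}` is spacelike and timelike Jordan Osserman. -/
theorem ansatz_is_jordan_osserman (κ₀ ξ11 ξ12 ξ13 ξ22 ξ23 ξ33 : ℝ) :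
    SpacelikeJordanOsserman (AKxi κ₀ ξ11 ξ12 ξ13 ξ22 ξ23 ξ33) ∧
    TimelikeJordanOsserman (AKxi κ₀ ξ11 ξ12 ξ13 ξ22 ξ23 ξ33) := by
  constructor
  · intro u w hu hw
    exact sim_of_eps κ₀ ξ11 ξ12 ξ13 ξ22 ξ23 ξ33 1 (Or.inl rfl) u w hu hw
  · intro u w hu hw
    exact sim_of_eps κ₀ ξ11 ξ12 ξ13 ξ22 ξ23 ξ33 (-1) (Or.inr rfl) u w hu hw
end

section
/- Let (Ψ₁,Ψ₂,Ψ₃) be the standard paraquaternionic structure on V, let a, c ∈ ℝ and b ≠ 0, and let A = (1/3)((a−b)A^{Ψ₁} + (−b−a)A^{Ψ₂} + bA^{Ψ₁+Ψ₂} + cA^{Ψ₃}). Then the model 𝔐 = (V,⟨·,·⟩,A) (which is of Type Ib, i.e. its Jacobi operators on unit spacelike vectors have a pair of complex conjugate eigenvalues a ± ib) is not null Jordan Osserman. -/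
open Matrix BigOperators

section AuxiliaryForTypeIb

/-- The explicit Jacobi matrix of the Type Ib model at the null vector
`(1+u², 0, 1−u², 2u)`. -/
def EMmat (a b c u : ℝ) : Matrix (Fin 4) (Fin 4) ℝ :=
  !![-(4*c*u^2) + a - 2*a*u^2 + a*u^4, 2*c*u - 2*c*u^3 + b - b*u^4 + 2*a*u - 2*a*u^3, -(2*b*u) + 2*b*u^3 - a + a*u^4, 2*c*u + 2*c*u^3 + b - 2*b*u^2 + b*u^4;
     2*c*u - 2*c*u^3 + b - b*u^4 + 2*a*u - 2*a*u^3, -c + 2*c*u^2 - c*u^4 + 4*b*u + 4*b*u^3 - a + 2*a*u^2 - a*u^4, -b - 6*b*u^2 - b*u^4, -c + c*u^4 + 2*b*u - 2*b*u^3 - a + a*u^4;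
     2*b*u - 2*b*u^3 + a - a*u^4, b + 6*b*u^2 + b*u^4, -(4*b*u) - 4*b*u^3 - a + 2*a*u^2 - a*u^4, b - b*u^4 - 2*a*u + 2*a*u^3;
     -(2*c*u) - 2*c*u^3 - b + 2*b*u^2 - b*u^4, c - c*u^4 - 2*b*u + 2*b*u^3 + a - a*u^4, b - b*u^4 - 2*a*u + 2*a*u^3, c + 2*c*u^2 + c*u^4 + a - 2*a*u^2 + a*u^4]

/-- Rank at most one, in an elementary formulation. -/
def RankLeOne (N : Matrix (Fin 4) (Fin 4) ℝ) : Prop :=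
  ∃ z : V4, ∀ y : V4, ∃ t : ℝ, N *ᵥ y = t • z

lemma similar_rankLeOne {M N : Matrix (Fin 4) (Fin 4) ℝ}
    (h : SimilarMat4 M N) (hN : RankLeOne N) : RankLeOne M := by
  obtain ⟨L, hdet, hML⟩ := h
  obtain ⟨z, hz⟩ := hN
  refine ⟨L *ᵥ z, fun y => ?_⟩
  obtain ⟨t, ht⟩ := hz (L⁻¹ *ᵥ y)
  refine ⟨t, ?_⟩
  have hM : M = L * N * L⁻¹ := by
    have h1 : L * L⁻¹ = 1 := Matrix.mul_nonsing_inv _ hdet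
    calc M = M * (L * L⁻¹) := by rw [h1, Matrix.mul_one]
    _ = (M * L) * L⁻¹ := by rw [Matrix.mul_assoc]
    _ = (L * N) * L⁻¹ := by rw [hML]
  rw [hM, ← Matrix.mulVec_mulVec, ← Matrix.mulVec_mulVec, ht, Matrix.mulVec_smul]

lemma stdbv0 : stdb 0 = ![1,0,0,0] := by ext j; fin_cases j <;> rfl
lemma stdbv1 : stdb 1 = ![0,1,0,0] := by ext j; fin_cases j <;> rfl
lemma stdbv2 : stdb 2 = ![0,0,1,0] := by ext j; fin_cases j <;> rfl
lemma stdbv3 : stdb 3 = ![0,0,0,1] := by ext j; fin_cases j <;> rfl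

lemma nip_explicit (x y : V4) :
    nip x y = -(x 0 * y 0) - x 1 * y 1 + x 2 * y 2 + x 3 * y 3 := rfl

end AuxiliaryForTypeIb
set_option maxHeartbeats 4000000 in
lemma jac_at_u (a b c u : ℝ) (A : V4 → V4 → V4 → V4 → ℝ)
    (hA : A = fun x y z w => (1/3) * ((a - b) * AcurvPsi psi1 x y z w
      + (-b - a) * AcurvPsi psi2 x y z w + b * AcurvPsi (psi1 + psi2) x y z w
      + c * AcurvPsi psi3 x y z w)) :
    jacobi A ![1+u^2, 0, 1-u^2, 2*u] = EMmat a b c u := by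
  have h00 : jacobi A ![1+u^2, 0, 1-u^2, 2*u] 0 0 = EMmat a b c u 0 0 := by
    rw [show jacobi A ![1+u^2, 0, 1-u^2, 2*u] 0 0 = eps 0 * A (stdb 0) ![1+u^2, 0, 1-u^2, 2*u] ![1+u^2, 0, 1-u^2, 2*u] (stdb 0) from rfl, hA]
    simp only [stdbv0, stdbv1, stdbv2, stdbv3, AcurvPsi, nip_explicit, Matrix.mulVec,
      dotProduct, Fin.sum_univ_four, psi1, psi2, psi3, Matrix.add_apply, eps, EMmat]
    norm_num [Matrix.cons_val_zero, Matrix.cons_val_one, Matrix.head_cons,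
      Matrix.vecHead, Matrix.vecTail, Function.comp, Matrix.cons_val_two, Matrix.cons_val_three]
    try ring
  have h01 : jacobi A ![1+u^2, 0, 1-u^2, 2*u] 0 1 = EMmat a b c u 0 1 := by
    rw [show jacobi A ![1+u^2, 0, 1-u^2, 2*u] 0 1 = eps 0 * A (stdb 1) ![1+u^2, 0, 1-u^2, 2*u] ![1+u^2, 0, 1-u^2, 2*u] (stdb 0) from rfl, hA]
    simp only [stdbv0, stdbv1, stdbv2, stdbv3, AcurvPsi, nip_explicit, Matrix.mulVec,
      dotProduct, Fin.sum_univ_four, psi1, psi2, psi3, Matrix.add_apply, eps, EMmat]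
    norm_num [Matrix.cons_val_zero, Matrix.cons_val_one, Matrix.head_cons,
      Matrix.vecHead, Matrix.vecTail, Function.comp, Matrix.cons_val_two, Matrix.cons_val_three]
    try ring
  have h02 : jacobi A ![1+u^2, 0, 1-u^2, 2*u] 0 2 = EMmat a b c u 0 2 := by
    rw [show jacobi A ![1+u^2, 0, 1-u^2, 2*u] 0 2 = eps 0 * A (stdb 2) ![1+u^2, 0, 1-u^2, 2*u] ![1+u^2, 0, 1-u^2, 2*u] (stdb 0) from rfl, hA]
    simp only [stdbv0, stdbv1, stdbv2, stdbv3, AcurvPsi, nip_explicit, Matrix.mulVec,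
      dotProduct, Fin.sum_univ_four, psi1, psi2, psi3, Matrix.add_apply, eps, EMmat]
    norm_num [Matrix.cons_val_zero, Matrix.cons_val_one, Matrix.head_cons,
      Matrix.vecHead, Matrix.vecTail, Function.comp, Matrix.cons_val_two, Matrix.cons_val_three]
    try ring
  have h03 : jacobi A ![1+u^2, 0, 1-u^2, 2*u] 0 3 = EMmat a b c u 0 3 := by
    rw [show jacobi A ![1+u^2, 0, 1-u^2, 2*u] 0 3 = eps 0 * A (stdb 3) ![1+u^2, 0, 1-u^2, 2*u] ![1+u^2, 0, 1-u^2, 2*u] (stdb 0) from rfl, hA]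
    simp only [stdbv0, stdbv1, stdbv2, stdbv3, AcurvPsi, nip_explicit, Matrix.mulVec,
      dotProduct, Fin.sum_univ_four, psi1, psi2, psi3, Matrix.add_apply, eps, EMmat]
    norm_num [Matrix.cons_val_zero, Matrix.cons_val_one, Matrix.head_cons,
      Matrix.vecHead, Matrix.vecTail, Function.comp, Matrix.cons_val_two, Matrix.cons_val_three]
    try ring
  have h10 : jacobi A ![1+u^2, 0, 1-u^2, 2*u] 1 0 = EMmat a b c u 1 0 := by
    rw [show jacobi A ![1+u^2, 0, 1-u^2, 2*u] 1 0 = eps 1 * A (stdb 0) ![1+u^2, 0, 1-u^2, 2*u] ![1+u^2, 0, 1-u^2, 2*u] (stdb 1) from rfl, hA]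
    simp only [stdbv0, stdbv1, stdbv2, stdbv3, AcurvPsi, nip_explicit, Matrix.mulVec,
      dotProduct, Fin.sum_univ_four, psi1, psi2, psi3, Matrix.add_apply, eps, EMmat]
    norm_num [Matrix.cons_val_zero, Matrix.cons_val_one, Matrix.head_cons,
      Matrix.vecHead, Matrix.vecTail, Function.comp, Matrix.cons_val_two, Matrix.cons_val_three]
    try ring
  have h11 : jacobi A ![1+u^2, 0, 1-u^2, 2*u] 1 1 = EMmat a b c u 1 1 := by
    rw [show jacobi A ![1+u^2, 0, 1-u^2, 2*u] 1 1 = eps 1 * A (stdb 1) ![1+u^2, 0, 1-u^2, 2*u] ![1+u^2, 0, 1-u^2, 2*u] (stdb 1) from rfl, hA]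
    simp only [stdbv0, stdbv1, stdbv2, stdbv3, AcurvPsi, nip_explicit, Matrix.mulVec,
      dotProduct, Fin.sum_univ_four, psi1, psi2, psi3, Matrix.add_apply, eps, EMmat]
    norm_num [Matrix.cons_val_zero, Matrix.cons_val_one, Matrix.head_cons,
      Matrix.vecHead, Matrix.vecTail, Function.comp, Matrix.cons_val_two, Matrix.cons_val_three]
    try ring
  have h12 : jacobi A ![1+u^2, 0, 1-u^2, 2*u] 1 2 = EMmat a b c u 1 2 := by
    rw [show jacobi A ![1+u^2, 0, 1-u^2, 2*u] 1 2 = eps 1 * A (stdb 2) ![1+u^2, 0, 1-u^2, 2*u] ![1+u^2, 0, 1-u^2, 2*u] (stdb 1) from rfl, hA]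
    simp only [stdbv0, stdbv1, stdbv2, stdbv3, AcurvPsi, nip_explicit, Matrix.mulVec,
      dotProduct, Fin.sum_univ_four, psi1, psi2, psi3, Matrix.add_apply, eps, EMmat]
    norm_num [Matrix.cons_val_zero, Matrix.cons_val_one, Matrix.head_cons,
      Matrix.vecHead, Matrix.vecTail, Function.comp, Matrix.cons_val_two, Matrix.cons_val_three]
    try ring
  have h13 : jacobi A ![1+u^2, 0, 1-u^2, 2*u] 1 3 = EMmat a b c u 1 3 := by
    rw [show jacobi A ![1+u^2, 0, 1-u^2, 2*u] 1 3 = eps 1 * A (stdb 3) ![1+u^2, 0, 1-u^2, 2*u] ![1+u^2, 0, 1-u^2, 2*u] (stdb 1) from rfl, hA]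
    simp only [stdbv0, stdbv1, stdbv2, stdbv3, AcurvPsi, nip_explicit, Matrix.mulVec,
      dotProduct, Fin.sum_univ_four, psi1, psi2, psi3, Matrix.add_apply, eps, EMmat]
    norm_num [Matrix.cons_val_zero, Matrix.cons_val_one, Matrix.head_cons,
      Matrix.vecHead, Matrix.vecTail, Function.comp, Matrix.cons_val_two, Matrix.cons_val_three]
    try ring
  have h20 : jacobi A ![1+u^2, 0, 1-u^2, 2*u] 2 0 = EMmat a b c u 2 0 := by
    rw [show jacobi A ![1+u^2, 0, 1-u^2, 2*u] 2 0 = eps 2 * A (stdb 0) ![1+u^2, 0, 1-u^2, 2*u] ![1+u^2, 0, 1-u^2, 2*u] (stdb 2) from rfl, hA]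
    simp only [stdbv0, stdbv1, stdbv2, stdbv3, AcurvPsi, nip_explicit, Matrix.mulVec,
      dotProduct, Fin.sum_univ_four, psi1, psi2, psi3, Matrix.add_apply, eps, EMmat]
    norm_num [Matrix.cons_val_zero, Matrix.cons_val_one, Matrix.head_cons,
      Matrix.vecHead, Matrix.vecTail, Function.comp, Matrix.cons_val_two, Matrix.cons_val_three]
    try ring
  have h21 : jacobi A ![1+u^2, 0, 1-u^2, 2*u] 2 1 = EMmat a b c u 2 1 := by
    rw [show jacobi A ![1+u^2, 0, 1-u^2, 2*u] 2 1 = eps 2 * A (stdb 1) ![1+u^2, 0, 1-u^2, 2*u] ![1+u^2, 0, 1-u^2, 2*u] (stdb 2) from rfl, hA]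
    simp only [stdbv0, stdbv1, stdbv2, stdbv3, AcurvPsi, nip_explicit, Matrix.mulVec,
      dotProduct, Fin.sum_univ_four, psi1, psi2, psi3, Matrix.add_apply, eps, EMmat]
    norm_num [Matrix.cons_val_zero, Matrix.cons_val_one, Matrix.head_cons,
      Matrix.vecHead, Matrix.vecTail, Function.comp, Matrix.cons_val_two, Matrix.cons_val_three]
    try ring
  have h22 : jacobi A ![1+u^2, 0, 1-u^2, 2*u] 2 2 = EMmat a b c u 2 2 := by
    rw [show jacobi A ![1+u^2, 0, 1-u^2, 2*u] 2 2 = eps 2 * A (stdb 2) ![1+u^2, 0, 1-u^2, 2*u] ![1+u^2, 0, 1-u^2, 2*u] (stdb 2) from rfl, hA]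
    simp only [stdbv0, stdbv1, stdbv2, stdbv3, AcurvPsi, nip_explicit, Matrix.mulVec,
      dotProduct, Fin.sum_univ_four, psi1, psi2, psi3, Matrix.add_apply, eps, EMmat]
    norm_num [Matrix.cons_val_zero, Matrix.cons_val_one, Matrix.head_cons,
      Matrix.vecHead, Matrix.vecTail, Function.comp, Matrix.cons_val_two, Matrix.cons_val_three]
    try ring
  have h23 : jacobi A ![1+u^2, 0, 1-u^2, 2*u] 2 3 = EMmat a b c u 2 3 := by
    rw [show jacobi A ![1+u^2, 0, 1-u^2, 2*u] 2 3 = eps 2 * A (stdb 3) ![1+u^2, 0, 1-u^2, 2*u] ![1+u^2, 0, 1-u^2, 2*u] (stdb 2) from rfl, hA]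
    simp only [stdbv0, stdbv1, stdbv2, stdbv3, AcurvPsi, nip_explicit, Matrix.mulVec,
      dotProduct, Fin.sum_univ_four, psi1, psi2, psi3, Matrix.add_apply, eps, EMmat]
    norm_num [Matrix.cons_val_zero, Matrix.cons_val_one, Matrix.head_cons,
      Matrix.vecHead, Matrix.vecTail, Function.comp, Matrix.cons_val_two, Matrix.cons_val_three]
    try ring
  have h30 : jacobi A ![1+u^2, 0, 1-u^2, 2*u] 3 0 = EMmat a b c u 3 0 := by
    rw [show jacobi A ![1+u^2, 0, 1-u^2, 2*u] 3 0 = eps 3 * A (stdb 0) ![1+u^2, 0, 1-u^2, 2*u] ![1+u^2, 0, 1-u^2, 2*u] (stdb 3) from rfl, hA]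
    simp only [stdbv0, stdbv1, stdbv2, stdbv3, AcurvPsi, nip_explicit, Matrix.mulVec,
      dotProduct, Fin.sum_univ_four, psi1, psi2, psi3, Matrix.add_apply, eps, EMmat]
    norm_num [Matrix.cons_val_zero, Matrix.cons_val_one, Matrix.head_cons,
      Matrix.vecHead, Matrix.vecTail, Function.comp, Matrix.cons_val_two, Matrix.cons_val_three]
    try ring
  have h31 : jacobi A ![1+u^2, 0, 1-u^2, 2*u] 3 1 = EMmat a b c u 3 1 := by
    rw [show jacobi A ![1+u^2, 0, 1-u^2, 2*u] 3 1 = eps 3 * A (stdb 1) ![1+u^2, 0, 1-u^2, 2*u] ![1+u^2, 0, 1-u^2, 2*u] (stdb 3) from rfl, hA]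
    simp only [stdbv0, stdbv1, stdbv2, stdbv3, AcurvPsi, nip_explicit, Matrix.mulVec,
      dotProduct, Fin.sum_univ_four, psi1, psi2, psi3, Matrix.add_apply, eps, EMmat]
    norm_num [Matrix.cons_val_zero, Matrix.cons_val_one, Matrix.head_cons,
      Matrix.vecHead, Matrix.vecTail, Function.comp, Matrix.cons_val_two, Matrix.cons_val_three]
    try ring
  have h32 : jacobi A ![1+u^2, 0, 1-u^2, 2*u] 3 2 = EMmat a b c u 3 2 := by
    rw [show jacobi A ![1+u^2, 0, 1-u^2, 2*u] 3 2 = eps 3 * A (stdb 2) ![1+u^2, 0, 1-u^2, 2*u] ![1+u^2, 0, 1-u^2, 2*u] (stdb 3) from rfl, hA]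
    simp only [stdbv0, stdbv1, stdbv2, stdbv3, AcurvPsi, nip_explicit, Matrix.mulVec,
      dotProduct, Fin.sum_univ_four, psi1, psi2, psi3, Matrix.add_apply, eps, EMmat]
    norm_num [Matrix.cons_val_zero, Matrix.cons_val_one, Matrix.head_cons,
      Matrix.vecHead, Matrix.vecTail, Function.comp, Matrix.cons_val_two, Matrix.cons_val_three]
    try ring
  have h33 : jacobi A ![1+u^2, 0, 1-u^2, 2*u] 3 3 = EMmat a b c u 3 3 := by
    rw [show jacobi A ![1+u^2, 0, 1-u^2, 2*u] 3 3 = eps 3 * A (stdb 3) ![1+u^2, 0, 1-u^2, 2*u] ![1+u^2, 0, 1-u^2, 2*u] (stdb 3) from rfl, hA]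
    simp only [stdbv0, stdbv1, stdbv2, stdbv3, AcurvPsi, nip_explicit, Matrix.mulVec,
      dotProduct, Fin.sum_univ_four, psi1, psi2, psi3, Matrix.add_apply, eps, EMmat]
    norm_num [Matrix.cons_val_zero, Matrix.cons_val_one, Matrix.head_cons,
      Matrix.vecHead, Matrix.vecTail, Function.comp, Matrix.cons_val_two, Matrix.cons_val_three]
    try ring
  ext i j
  fin_cases i <;> fin_cases j
  exacts [h00, h01, h02, h03, h10, h11, h12, h13, h20, h21, h22, h23, h30, h31, h32, h33]
set_option maxHeartbeats 2000000 in
lemma jac_e14 (a b c : ℝ) (A : V4 → V4 → V4 → V4 → ℝ)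
    (hA : A = fun x y z w => (1/3) * ((a - b) * AcurvPsi psi1 x y z w
      + (-b - a) * AcurvPsi psi2 x y z w + b * AcurvPsi (psi1 + psi2) x y z w
      + c * AcurvPsi psi3 x y z w)) :
    jacobi A ![(1:ℝ),0,0,1] = !![-c,0,0,c; 0,2*b,-(2*b),0; 0,2*b,-(2*b),0; -c,0,0,c] := by
  have h00 : jacobi A ![(1:ℝ),0,0,1] 0 0 = (!![-c,0,0,c; 0,2*b,-(2*b),0; 0,2*b,-(2*b),0; -c,0,0,c]) 0 0 := by
    rw [show jacobi A ![(1:ℝ),0,0,1] 0 0 = eps 0 * A (stdb 0) ![(1:ℝ),0,0,1] ![(1:ℝ),0,0,1] (stdb 0) from rfl, hA]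
    simp only [stdbv0, stdbv1, stdbv2, stdbv3, AcurvPsi, nip_explicit, Matrix.mulVec,
      dotProduct, Fin.sum_univ_four, psi1, psi2, psi3, Matrix.add_apply, eps]
    norm_num [Matrix.cons_val_zero, Matrix.cons_val_one, Matrix.head_cons,
      Matrix.vecHead, Matrix.vecTail, Function.comp, Matrix.cons_val_two, Matrix.cons_val_three]
    try ring
  have h01 : jacobi A ![(1:ℝ),0,0,1] 0 1 = (!![-c,0,0,c; 0,2*b,-(2*b),0; 0,2*b,-(2*b),0; -c,0,0,c]) 0 1 := by
    rw [show jacobi A ![(1:ℝ),0,0,1] 0 1 = eps 0 * A (stdb 1) ![(1:ℝ),0,0,1] ![(1:ℝ),0,0,1] (stdb 0) from rfl, hA]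
    simp only [stdbv0, stdbv1, stdbv2, stdbv3, AcurvPsi, nip_explicit, Matrix.mulVec,
      dotProduct, Fin.sum_univ_four, psi1, psi2, psi3, Matrix.add_apply, eps]
    norm_num [Matrix.cons_val_zero, Matrix.cons_val_one, Matrix.head_cons,
      Matrix.vecHead, Matrix.vecTail, Function.comp, Matrix.cons_val_two, Matrix.cons_val_three]
    try ring
  have h02 : jacobi A ![(1:ℝ),0,0,1] 0 2 = (!![-c,0,0,c; 0,2*b,-(2*b),0; 0,2*b,-(2*b),0; -c,0,0,c]) 0 2 := by
    rw [show jacobi A ![(1:ℝ),0,0,1] 0 2 = eps 0 * A (stdb 2) ![(1:ℝ),0,0,1] ![(1:ℝ),0,0,1] (stdb 0) from rfl, hA]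
    simp only [stdbv0, stdbv1, stdbv2, stdbv3, AcurvPsi, nip_explicit, Matrix.mulVec,
      dotProduct, Fin.sum_univ_four, psi1, psi2, psi3, Matrix.add_apply, eps]
    norm_num [Matrix.cons_val_zero, Matrix.cons_val_one, Matrix.head_cons,
      Matrix.vecHead, Matrix.vecTail, Function.comp, Matrix.cons_val_two, Matrix.cons_val_three]
    try ring
  have h03 : jacobi A ![(1:ℝ),0,0,1] 0 3 = (!![-c,0,0,c; 0,2*b,-(2*b),0; 0,2*b,-(2*b),0; -c,0,0,c]) 0 3 := by
    rw [show jacobi A ![(1:ℝ),0,0,1] 0 3 = eps 0 * A (stdb 3) ![(1:ℝ),0,0,1] ![(1:ℝ),0,0,1] (stdb 0) from rfl, hA]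
    simp only [stdbv0, stdbv1, stdbv2, stdbv3, AcurvPsi, nip_explicit, Matrix.mulVec,
      dotProduct, Fin.sum_univ_four, psi1, psi2, psi3, Matrix.add_apply, eps]
    norm_num [Matrix.cons_val_zero, Matrix.cons_val_one, Matrix.head_cons,
      Matrix.vecHead, Matrix.vecTail, Function.comp, Matrix.cons_val_two, Matrix.cons_val_three]
    try ring
  have h10 : jacobi A ![(1:ℝ),0,0,1] 1 0 = (!![-c,0,0,c; 0,2*b,-(2*b),0; 0,2*b,-(2*b),0; -c,0,0,c]) 1 0 := by
    rw [show jacobi A ![(1:ℝ),0,0,1] 1 0 = eps 1 * A (stdb 0) ![(1:ℝ),0,0,1] ![(1:ℝ),0,0,1] (stdb 1) from rfl, hA]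
    simp only [stdbv0, stdbv1, stdbv2, stdbv3, AcurvPsi, nip_explicit, Matrix.mulVec,
      dotProduct, Fin.sum_univ_four, psi1, psi2, psi3, Matrix.add_apply, eps]
    norm_num [Matrix.cons_val_zero, Matrix.cons_val_one, Matrix.head_cons,
      Matrix.vecHead, Matrix.vecTail, Function.comp, Matrix.cons_val_two, Matrix.cons_val_three]
    try ring
  have h11 : jacobi A ![(1:ℝ),0,0,1] 1 1 = (!![-c,0,0,c; 0,2*b,-(2*b),0; 0,2*b,-(2*b),0; -c,0,0,c]) 1 1 := by
    rw [show jacobi A ![(1:ℝ),0,0,1] 1 1 = eps 1 * A (stdb 1) ![(1:ℝ),0,0,1] ![(1:ℝ),0,0,1] (stdb 1) from rfl, hA]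
    simp only [stdbv0, stdbv1, stdbv2, stdbv3, AcurvPsi, nip_explicit, Matrix.mulVec,
      dotProduct, Fin.sum_univ_four, psi1, psi2, psi3, Matrix.add_apply, eps]
    norm_num [Matrix.cons_val_zero, Matrix.cons_val_one, Matrix.head_cons,
      Matrix.vecHead, Matrix.vecTail, Function.comp, Matrix.cons_val_two, Matrix.cons_val_three]
    try ring
  have h12 : jacobi A ![(1:ℝ),0,0,1] 1 2 = (!![-c,0,0,c; 0,2*b,-(2*b),0; 0,2*b,-(2*b),0; -c,0,0,c]) 1 2 := by
    rw [show jacobi A ![(1:ℝ),0,0,1] 1 2 = eps 1 * A (stdb 2) ![(1:ℝ),0,0,1] ![(1:ℝ),0,0,1] (stdb 1) from rfl, hA]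
    simp only [stdbv0, stdbv1, stdbv2, stdbv3, AcurvPsi, nip_explicit, Matrix.mulVec,
      dotProduct, Fin.sum_univ_four, psi1, psi2, psi3, Matrix.add_apply, eps]
    norm_num [Matrix.cons_val_zero, Matrix.cons_val_one, Matrix.head_cons,
      Matrix.vecHead, Matrix.vecTail, Function.comp, Matrix.cons_val_two, Matrix.cons_val_three]
    try ring
  have h13 : jacobi A ![(1:ℝ),0,0,1] 1 3 = (!![-c,0,0,c; 0,2*b,-(2*b),0; 0,2*b,-(2*b),0; -c,0,0,c]) 1 3 := by
    rw [show jacobi A ![(1:ℝ),0,0,1] 1 3 = eps 1 * A (stdb 3) ![(1:ℝ),0,0,1] ![(1:ℝ),0,0,1] (stdb 1) from rfl, hA]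
    simp only [stdbv0, stdbv1, stdbv2, stdbv3, AcurvPsi, nip_explicit, Matrix.mulVec,
      dotProduct, Fin.sum_univ_four, psi1, psi2, psi3, Matrix.add_apply, eps]
    norm_num [Matrix.cons_val_zero, Matrix.cons_val_one, Matrix.head_cons,
      Matrix.vecHead, Matrix.vecTail, Function.comp, Matrix.cons_val_two, Matrix.cons_val_three]
    try ring
  have h20 : jacobi A ![(1:ℝ),0,0,1] 2 0 = (!![-c,0,0,c; 0,2*b,-(2*b),0; 0,2*b,-(2*b),0; -c,0,0,c]) 2 0 := by
    rw [show jacobi A ![(1:ℝ),0,0,1] 2 0 = eps 2 * A (stdb 0) ![(1:ℝ),0,0,1] ![(1:ℝ),0,0,1] (stdb 2) from rfl, hA]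
    simp only [stdbv0, stdbv1, stdbv2, stdbv3, AcurvPsi, nip_explicit, Matrix.mulVec,
      dotProduct, Fin.sum_univ_four, psi1, psi2, psi3, Matrix.add_apply, eps]
    norm_num [Matrix.cons_val_zero, Matrix.cons_val_one, Matrix.head_cons,
      Matrix.vecHead, Matrix.vecTail, Function.comp, Matrix.cons_val_two, Matrix.cons_val_three]
    try ring
  have h21 : jacobi A ![(1:ℝ),0,0,1] 2 1 = (!![-c,0,0,c; 0,2*b,-(2*b),0; 0,2*b,-(2*b),0; -c,0,0,c]) 2 1 := by
    rw [show jacobi A ![(1:ℝ),0,0,1] 2 1 = eps 2 * A (stdb 1) ![(1:ℝ),0,0,1] ![(1:ℝ),0,0,1] (stdb 2) from rfl, hA]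
    simp only [stdbv0, stdbv1, stdbv2, stdbv3, AcurvPsi, nip_explicit, Matrix.mulVec,
      dotProduct, Fin.sum_univ_four, psi1, psi2, psi3, Matrix.add_apply, eps]
    norm_num [Matrix.cons_val_zero, Matrix.cons_val_one, Matrix.head_cons,
      Matrix.vecHead, Matrix.vecTail, Function.comp, Matrix.cons_val_two, Matrix.cons_val_three]
    try ring
  have h22 : jacobi A ![(1:ℝ),0,0,1] 2 2 = (!![-c,0,0,c; 0,2*b,-(2*b),0; 0,2*b,-(2*b),0; -c,0,0,c]) 2 2 := by
    rw [show jacobi A ![(1:ℝ),0,0,1] 2 2 = eps 2 * A (stdb 2) ![(1:ℝ),0,0,1] ![(1:ℝ),0,0,1] (stdb 2) from rfl, hA]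
    simp only [stdbv0, stdbv1, stdbv2, stdbv3, AcurvPsi, nip_explicit, Matrix.mulVec,
      dotProduct, Fin.sum_univ_four, psi1, psi2, psi3, Matrix.add_apply, eps]
    norm_num [Matrix.cons_val_zero, Matrix.cons_val_one, Matrix.head_cons,
      Matrix.vecHead, Matrix.vecTail, Function.comp, Matrix.cons_val_two, Matrix.cons_val_three]
    try ring
  have h23 : jacobi A ![(1:ℝ),0,0,1] 2 3 = (!![-c,0,0,c; 0,2*b,-(2*b),0; 0,2*b,-(2*b),0; -c,0,0,c]) 2 3 := by
    rw [show jacobi A ![(1:ℝ),0,0,1] 2 3 = eps 2 * A (stdb 3) ![(1:ℝ),0,0,1] ![(1:ℝ),0,0,1] (stdb 2) from rfl, hA]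
    simp only [stdbv0, stdbv1, stdbv2, stdbv3, AcurvPsi, nip_explicit, Matrix.mulVec,
      dotProduct, Fin.sum_univ_four, psi1, psi2, psi3, Matrix.add_apply, eps]
    norm_num [Matrix.cons_val_zero, Matrix.cons_val_one, Matrix.head_cons,
      Matrix.vecHead, Matrix.vecTail, Function.comp, Matrix.cons_val_two, Matrix.cons_val_three]
    try ring
  have h30 : jacobi A ![(1:ℝ),0,0,1] 3 0 = (!![-c,0,0,c; 0,2*b,-(2*b),0; 0,2*b,-(2*b),0; -c,0,0,c]) 3 0 := by
    rw [show jacobi A ![(1:ℝ),0,0,1] 3 0 = eps 3 * A (stdb 0) ![(1:ℝ),0,0,1] ![(1:ℝ),0,0,1] (stdb 3) from rfl, hA]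
    simp only [stdbv0, stdbv1, stdbv2, stdbv3, AcurvPsi, nip_explicit, Matrix.mulVec,
      dotProduct, Fin.sum_univ_four, psi1, psi2, psi3, Matrix.add_apply, eps]
    norm_num [Matrix.cons_val_zero, Matrix.cons_val_one, Matrix.head_cons,
      Matrix.vecHead, Matrix.vecTail, Function.comp, Matrix.cons_val_two, Matrix.cons_val_three]
    try ring
  have h31 : jacobi A ![(1:ℝ),0,0,1] 3 1 = (!![-c,0,0,c; 0,2*b,-(2*b),0; 0,2*b,-(2*b),0; -c,0,0,c]) 3 1 := by
    rw [show jacobi A ![(1:ℝ),0,0,1] 3 1 = eps 3 * A (stdb 1) ![(1:ℝ),0,0,1] ![(1:ℝ),0,0,1] (stdb 3) from rfl, hA]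
    simp only [stdbv0, stdbv1, stdbv2, stdbv3, AcurvPsi, nip_explicit, Matrix.mulVec,
      dotProduct, Fin.sum_univ_four, psi1, psi2, psi3, Matrix.add_apply, eps]
    norm_num [Matrix.cons_val_zero, Matrix.cons_val_one, Matrix.head_cons,
      Matrix.vecHead, Matrix.vecTail, Function.comp, Matrix.cons_val_two, Matrix.cons_val_three]
    try ring
  have h32 : jacobi A ![(1:ℝ),0,0,1] 3 2 = (!![-c,0,0,c; 0,2*b,-(2*b),0; 0,2*b,-(2*b),0; -c,0,0,c]) 3 2 := by
    rw [show jacobi A ![(1:ℝ),0,0,1] 3 2 = eps 3 * A (stdb 2) ![(1:ℝ),0,0,1] ![(1:ℝ),0,0,1] (stdb 3) from rfl, hA]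
    simp only [stdbv0, stdbv1, stdbv2, stdbv3, AcurvPsi, nip_explicit, Matrix.mulVec,
      dotProduct, Fin.sum_univ_four, psi1, psi2, psi3, Matrix.add_apply, eps]
    norm_num [Matrix.cons_val_zero, Matrix.cons_val_one, Matrix.head_cons,
      Matrix.vecHead, Matrix.vecTail, Function.comp, Matrix.cons_val_two, Matrix.cons_val_three]
    try ring
  have h33 : jacobi A ![(1:ℝ),0,0,1] 3 3 = (!![-c,0,0,c; 0,2*b,-(2*b),0; 0,2*b,-(2*b),0; -c,0,0,c]) 3 3 := by
    rw [show jacobi A ![(1:ℝ),0,0,1] 3 3 = eps 3 * A (stdb 3) ![(1:ℝ),0,0,1] ![(1:ℝ),0,0,1] (stdb 3) from rfl, hA]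
    simp only [stdbv0, stdbv1, stdbv2, stdbv3, AcurvPsi, nip_explicit, Matrix.mulVec,
      dotProduct, Fin.sum_univ_four, psi1, psi2, psi3, Matrix.add_apply, eps]
    norm_num [Matrix.cons_val_zero, Matrix.cons_val_one, Matrix.head_cons,
      Matrix.vecHead, Matrix.vecTail, Function.comp, Matrix.cons_val_two, Matrix.cons_val_three]
    try ring
  ext i j
  fin_cases i <;> fin_cases j
  exacts [h00, h01, h02, h03, h10, h11, h12, h13, h20, h21, h22, h23, h30, h31, h32, h33]

set_option maxHeartbeats 2000000 in
lemma jac_e13 (a b c : ℝ) (A : V4 → V4 → V4 → V4 → ℝ)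
    (hA : A = fun x y z w => (1/3) * ((a - b) * AcurvPsi psi1 x y z w
      + (-b - a) * AcurvPsi psi2 x y z w + b * AcurvPsi (psi1 + psi2) x y z w
      + c * AcurvPsi psi3 x y z w)) :
    jacobi A ![(1:ℝ),0,1,0] = !![a,b,-a,b; b,-(a+c),-b,-(a+c); a,b,-a,b; -b,a+c,b,a+c] := by
  have h00 : jacobi A ![(1:ℝ),0,1,0] 0 0 = (!![a,b,-a,b; b,-(a+c),-b,-(a+c); a,b,-a,b; -b,a+c,b,a+c]) 0 0 := by
    rw [show jacobi A ![(1:ℝ),0,1,0] 0 0 = eps 0 * A (stdb 0) ![(1:ℝ),0,1,0] ![(1:ℝ),0,1,0] (stdb 0) from rfl, hA]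
    simp only [stdbv0, stdbv1, stdbv2, stdbv3, AcurvPsi, nip_explicit, Matrix.mulVec,
      dotProduct, Fin.sum_univ_four, psi1, psi2, psi3, Matrix.add_apply, eps]
    norm_num [Matrix.cons_val_zero, Matrix.cons_val_one, Matrix.head_cons,
      Matrix.vecHead, Matrix.vecTail, Function.comp, Matrix.cons_val_two, Matrix.cons_val_three]
    try ring
  have h01 : jacobi A ![(1:ℝ),0,1,0] 0 1 = (!![a,b,-a,b; b,-(a+c),-b,-(a+c); a,b,-a,b; -b,a+c,b,a+c]) 0 1 := by
    rw [show jacobi A ![(1:ℝ),0,1,0] 0 1 = eps 0 * A (stdb 1) ![(1:ℝ),0,1,0] ![(1:ℝ),0,1,0] (stdb 0) from rfl, hA]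
    simp only [stdbv0, stdbv1, stdbv2, stdbv3, AcurvPsi, nip_explicit, Matrix.mulVec,
      dotProduct, Fin.sum_univ_four, psi1, psi2, psi3, Matrix.add_apply, eps]
    norm_num [Matrix.cons_val_zero, Matrix.cons_val_one, Matrix.head_cons,
      Matrix.vecHead, Matrix.vecTail, Function.comp, Matrix.cons_val_two, Matrix.cons_val_three]
    try ring
  have h02 : jacobi A ![(1:ℝ),0,1,0] 0 2 = (!![a,b,-a,b; b,-(a+c),-b,-(a+c); a,b,-a,b; -b,a+c,b,a+c]) 0 2 := by
    rw [show jacobi A ![(1:ℝ),0,1,0] 0 2 = eps 0 * A (stdb 2) ![(1:ℝ),0,1,0] ![(1:ℝ),0,1,0] (stdb 0) from rfl, hA]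
    simp only [stdbv0, stdbv1, stdbv2, stdbv3, AcurvPsi, nip_explicit, Matrix.mulVec,
      dotProduct, Fin.sum_univ_four, psi1, psi2, psi3, Matrix.add_apply, eps]
    norm_num [Matrix.cons_val_zero, Matrix.cons_val_one, Matrix.head_cons,
      Matrix.vecHead, Matrix.vecTail, Function.comp, Matrix.cons_val_two, Matrix.cons_val_three]
    try ring
  have h03 : jacobi A ![(1:ℝ),0,1,0] 0 3 = (!![a,b,-a,b; b,-(a+c),-b,-(a+c); a,b,-a,b; -b,a+c,b,a+c]) 0 3 := by
    rw [show jacobi A ![(1:ℝ),0,1,0] 0 3 = eps 0 * A (stdb 3) ![(1:ℝ),0,1,0] ![(1:ℝ),0,1,0] (stdb 0) from rfl, hA]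
    simp only [stdbv0, stdbv1, stdbv2, stdbv3, AcurvPsi, nip_explicit, Matrix.mulVec,
      dotProduct, Fin.sum_univ_four, psi1, psi2, psi3, Matrix.add_apply, eps]
    norm_num [Matrix.cons_val_zero, Matrix.cons_val_one, Matrix.head_cons,
      Matrix.vecHead, Matrix.vecTail, Function.comp, Matrix.cons_val_two, Matrix.cons_val_three]
    try ring
  have h10 : jacobi A ![(1:ℝ),0,1,0] 1 0 = (!![a,b,-a,b; b,-(a+c),-b,-(a+c); a,b,-a,b; -b,a+c,b,a+c]) 1 0 := by
    rw [show jacobi A ![(1:ℝ),0,1,0] 1 0 = eps 1 * A (stdb 0) ![(1:ℝ),0,1,0] ![(1:ℝ),0,1,0] (stdb 1) from rfl, hA]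
    simp only [stdbv0, stdbv1, stdbv2, stdbv3, AcurvPsi, nip_explicit, Matrix.mulVec,
      dotProduct, Fin.sum_univ_four, psi1, psi2, psi3, Matrix.add_apply, eps]
    norm_num [Matrix.cons_val_zero, Matrix.cons_val_one, Matrix.head_cons,
      Matrix.vecHead, Matrix.vecTail, Function.comp, Matrix.cons_val_two, Matrix.cons_val_three]
    try ring
  have h11 : jacobi A ![(1:ℝ),0,1,0] 1 1 = (!![a,b,-a,b; b,-(a+c),-b,-(a+c); a,b,-a,b; -b,a+c,b,a+c]) 1 1 := by
    rw [show jacobi A ![(1:ℝ),0,1,0] 1 1 = eps 1 * A (stdb 1) ![(1:ℝ),0,1,0] ![(1:ℝ),0,1,0] (stdb 1) from rfl, hA]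
    simp only [stdbv0, stdbv1, stdbv2, stdbv3, AcurvPsi, nip_explicit, Matrix.mulVec,
      dotProduct, Fin.sum_univ_four, psi1, psi2, psi3, Matrix.add_apply, eps]
    norm_num [Matrix.cons_val_zero, Matrix.cons_val_one, Matrix.head_cons,
      Matrix.vecHead, Matrix.vecTail, Function.comp, Matrix.cons_val_two, Matrix.cons_val_three]
    try ring
  have h12 : jacobi A ![(1:ℝ),0,1,0] 1 2 = (!![a,b,-a,b; b,-(a+c),-b,-(a+c); a,b,-a,b; -b,a+c,b,a+c]) 1 2 := by
    rw [show jacobi A ![(1:ℝ),0,1,0] 1 2 = eps 1 * A (stdb 2) ![(1:ℝ),0,1,0] ![(1:ℝ),0,1,0] (stdb 1) from rfl, hA]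
    simp only [stdbv0, stdbv1, stdbv2, stdbv3, AcurvPsi, nip_explicit, Matrix.mulVec,
      dotProduct, Fin.sum_univ_four, psi1, psi2, psi3, Matrix.add_apply, eps]
    norm_num [Matrix.cons_val_zero, Matrix.cons_val_one, Matrix.head_cons,
      Matrix.vecHead, Matrix.vecTail, Function.comp, Matrix.cons_val_two, Matrix.cons_val_three]
    try ring
  have h13 : jacobi A ![(1:ℝ),0,1,0] 1 3 = (!![a,b,-a,b; b,-(a+c),-b,-(a+c); a,b,-a,b; -b,a+c,b,a+c]) 1 3 := by
    rw [show jacobi A ![(1:ℝ),0,1,0] 1 3 = eps 1 * A (stdb 3) ![(1:ℝ),0,1,0] ![(1:ℝ),0,1,0] (stdb 1) from rfl, hA]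
    simp only [stdbv0, stdbv1, stdbv2, stdbv3, AcurvPsi, nip_explicit, Matrix.mulVec,
      dotProduct, Fin.sum_univ_four, psi1, psi2, psi3, Matrix.add_apply, eps]
    norm_num [Matrix.cons_val_zero, Matrix.cons_val_one, Matrix.head_cons,
      Matrix.vecHead, Matrix.vecTail, Function.comp, Matrix.cons_val_two, Matrix.cons_val_three]
    try ring
  have h20 : jacobi A ![(1:ℝ),0,1,0] 2 0 = (!![a,b,-a,b; b,-(a+c),-b,-(a+c); a,b,-a,b; -b,a+c,b,a+c]) 2 0 := by
    rw [show jacobi A ![(1:ℝ),0,1,0] 2 0 = eps 2 * A (stdb 0) ![(1:ℝ),0,1,0] ![(1:ℝ),0,1,0] (stdb 2) from rfl, hA]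
    simp only [stdbv0, stdbv1, stdbv2, stdbv3, AcurvPsi, nip_explicit, Matrix.mulVec,
      dotProduct, Fin.sum_univ_four, psi1, psi2, psi3, Matrix.add_apply, eps]
    norm_num [Matrix.cons_val_zero, Matrix.cons_val_one, Matrix.head_cons,
      Matrix.vecHead, Matrix.vecTail, Function.comp, Matrix.cons_val_two, Matrix.cons_val_three]
    try ring
  have h21 : jacobi A ![(1:ℝ),0,1,0] 2 1 = (!![a,b,-a,b; b,-(a+c),-b,-(a+c); a,b,-a,b; -b,a+c,b,a+c]) 2 1 := by
    rw [show jacobi A ![(1:ℝ),0,1,0] 2 1 = eps 2 * A (stdb 1) ![(1:ℝ),0,1,0] ![(1:ℝ),0,1,0] (stdb 2) from rfl, hA]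
    simp only [stdbv0, stdbv1, stdbv2, stdbv3, AcurvPsi, nip_explicit, Matrix.mulVec,
      dotProduct, Fin.sum_univ_four, psi1, psi2, psi3, Matrix.add_apply, eps]
    norm_num [Matrix.cons_val_zero, Matrix.cons_val_one, Matrix.head_cons,
      Matrix.vecHead, Matrix.vecTail, Function.comp, Matrix.cons_val_two, Matrix.cons_val_three]
    try ring
  have h22 : jacobi A ![(1:ℝ),0,1,0] 2 2 = (!![a,b,-a,b; b,-(a+c),-b,-(a+c); a,b,-a,b; -b,a+c,b,a+c]) 2 2 := by
    rw [show jacobi A ![(1:ℝ),0,1,0] 2 2 = eps 2 * A (stdb 2) ![(1:ℝ),0,1,0] ![(1:ℝ),0,1,0] (stdb 2) from rfl, hA]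
    simp only [stdbv0, stdbv1, stdbv2, stdbv3, AcurvPsi, nip_explicit, Matrix.mulVec,
      dotProduct, Fin.sum_univ_four, psi1, psi2, psi3, Matrix.add_apply, eps]
    norm_num [Matrix.cons_val_zero, Matrix.cons_val_one, Matrix.head_cons,
      Matrix.vecHead, Matrix.vecTail, Function.comp, Matrix.cons_val_two, Matrix.cons_val_three]
    try ring
  have h23 : jacobi A ![(1:ℝ),0,1,0] 2 3 = (!![a,b,-a,b; b,-(a+c),-b,-(a+c); a,b,-a,b; -b,a+c,b,a+c]) 2 3 := by
    rw [show jacobi A ![(1:ℝ),0,1,0] 2 3 = eps 2 * A (stdb 3) ![(1:ℝ),0,1,0] ![(1:ℝ),0,1,0] (stdb 2) from rfl, hA]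
    simp only [stdbv0, stdbv1, stdbv2, stdbv3, AcurvPsi, nip_explicit, Matrix.mulVec,
      dotProduct, Fin.sum_univ_four, psi1, psi2, psi3, Matrix.add_apply, eps]
    norm_num [Matrix.cons_val_zero, Matrix.cons_val_one, Matrix.head_cons,
      Matrix.vecHead, Matrix.vecTail, Function.comp, Matrix.cons_val_two, Matrix.cons_val_three]
    try ring
  have h30 : jacobi A ![(1:ℝ),0,1,0] 3 0 = (!![a,b,-a,b; b,-(a+c),-b,-(a+c); a,b,-a,b; -b,a+c,b,a+c]) 3 0 := by
    rw [show jacobi A ![(1:ℝ),0,1,0] 3 0 = eps 3 * A (stdb 0) ![(1:ℝ),0,1,0] ![(1:ℝ),0,1,0] (stdb 3) from rfl, hA]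
    simp only [stdbv0, stdbv1, stdbv2, stdbv3, AcurvPsi, nip_explicit, Matrix.mulVec,
      dotProduct, Fin.sum_univ_four, psi1, psi2, psi3, Matrix.add_apply, eps]
    norm_num [Matrix.cons_val_zero, Matrix.cons_val_one, Matrix.head_cons,
      Matrix.vecHead, Matrix.vecTail, Function.comp, Matrix.cons_val_two, Matrix.cons_val_three]
    try ring
  have h31 : jacobi A ![(1:ℝ),0,1,0] 3 1 = (!![a,b,-a,b; b,-(a+c),-b,-(a+c); a,b,-a,b; -b,a+c,b,a+c]) 3 1 := by
    rw [show jacobi A ![(1:ℝ),0,1,0] 3 1 = eps 3 * A (stdb 1) ![(1:ℝ),0,1,0] ![(1:ℝ),0,1,0] (stdb 3) from rfl, hA]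
    simp only [stdbv0, stdbv1, stdbv2, stdbv3, AcurvPsi, nip_explicit, Matrix.mulVec,
      dotProduct, Fin.sum_univ_four, psi1, psi2, psi3, Matrix.add_apply, eps]
    norm_num [Matrix.cons_val_zero, Matrix.cons_val_one, Matrix.head_cons,
      Matrix.vecHead, Matrix.vecTail, Function.comp, Matrix.cons_val_two, Matrix.cons_val_three]
    try ring
  have h32 : jacobi A ![(1:ℝ),0,1,0] 3 2 = (!![a,b,-a,b; b,-(a+c),-b,-(a+c); a,b,-a,b; -b,a+c,b,a+c]) 3 2 := by
    rw [show jacobi A ![(1:ℝ),0,1,0] 3 2 = eps 3 * A (stdb 2) ![(1:ℝ),0,1,0] ![(1:ℝ),0,1,0] (stdb 3) from rfl, hA]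
    simp only [stdbv0, stdbv1, stdbv2, stdbv3, AcurvPsi, nip_explicit, Matrix.mulVec,
      dotProduct, Fin.sum_univ_four, psi1, psi2, psi3, Matrix.add_apply, eps]
    norm_num [Matrix.cons_val_zero, Matrix.cons_val_one, Matrix.head_cons,
      Matrix.vecHead, Matrix.vecTail, Function.comp, Matrix.cons_val_two, Matrix.cons_val_three]
    try ring
  have h33 : jacobi A ![(1:ℝ),0,1,0] 3 3 = (!![a,b,-a,b; b,-(a+c),-b,-(a+c); a,b,-a,b; -b,a+c,b,a+c]) 3 3 := by
    rw [show jacobi A ![(1:ℝ),0,1,0] 3 3 = eps 3 * A (stdb 3) ![(1:ℝ),0,1,0] ![(1:ℝ),0,1,0] (stdb 3) from rfl, hA]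
    simp only [stdbv0, stdbv1, stdbv2, stdbv3, AcurvPsi, nip_explicit, Matrix.mulVec,
      dotProduct, Fin.sum_univ_four, psi1, psi2, psi3, Matrix.add_apply, eps]
    norm_num [Matrix.cons_val_zero, Matrix.cons_val_one, Matrix.head_cons,
      Matrix.vecHead, Matrix.vecTail, Function.comp, Matrix.cons_val_two, Matrix.cons_val_three]
    try ring
  ext i j
  fin_cases i <;> fin_cases j
  exacts [h00, h01, h02, h03, h10, h11, h12, h13, h20, h21, h22, h23, h30, h31, h32, h33]


def xU (u : ℝ) : V4 := ![1+u^2, 0, 1-u^2, 2*u]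
def wU (u : ℝ) : V4 := ![0, -(1+u^2), -(2*u), 1-u^2]

/-- The rank condition polynomial. -/
def Dpoly (a b c u : ℝ) : ℝ :=
  (c*(2*u)^2 - a*(1-u^2)^2) * ((a+c)*(1-u^2)^2 - 2*b*(2*u)*(1+u^2)) - ((1-u^2)*(b*(1+u^2)+(a+c)*(2*u)))^2

lemma exists_Dpoly_root (a b c : ℝ) : ∃ u : ℝ, Dpoly a b c u = 0 := by
  have hcont : Continuous (fun u : ℝ => Dpoly a b c u) := by
    unfold Dpoly; continuity
  have hm1 : Dpoly a b c (-1) = 32*b*c := by unfold Dpoly; ring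
  have hp1 : Dpoly a b c 1 = -(32*b*c) := by unfold Dpoly; ring
  have h0 : (0:ℝ) ∈ Set.uIcc (Dpoly a b c (-1)) (Dpoly a b c 1) := by
    rw [hm1, hp1, Set.mem_uIcc]
    rcases le_or_gt (b*c) 0 with h | h
    · exact Or.inl ⟨by linarith, by linarith⟩
    · exact Or.inr ⟨by linarith, by linarith⟩
  obtain ⟨u0, _, hu0⟩ := intermediate_value_uIcc (hcont.continuousOn) h0
  exact ⟨u0, hu0⟩

set_option maxHeartbeats 2000000 in
lemma key_decomp (a b c u : ℝ) (y : V4) :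
    ∀ i, (1+u^2)^2 * (EMmat a b c u *ᵥ y) i
      = xU u i * ((c*(2*u)^2 - a*(1-u^2)^2)*(-((1+u^2) * y 0) + (1-u^2) * y 2 + (2*u) * y 3) + ((1-u^2)*(b*(1+u^2)+(a+c)*(2*u)))*((1+u^2) * y 1 - (2*u) * y 2 + (1-u^2) * y 3))
        + wU u i * (((1-u^2)*(b*(1+u^2)+(a+c)*(2*u)))*(-((1+u^2) * y 0) + (1-u^2) * y 2 + (2*u) * y 3) + ((a+c)*(1-u^2)^2 - 2*b*(2*u)*(1+u^2))*((1+u^2) * y 1 - (2*u) * y 2 + (1-u^2) * y 3)) := by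
  intro i
  fin_cases i <;>
  · simp [EMmat, xU, wU, Matrix.mulVec, dotProduct, Fin.sum_univ_four]
    ring

set_option maxHeartbeats 1000000 in
lemma rankLeOne_EM (a b c u : ℝ) (hD : Dpoly a b c u = 0) :
    RankLeOne (EMmat a b c u) := by
  have hp2 : ((1+u^2)^2:ℝ) ≠ 0 := by positivity
  rw [Dpoly] at hD
  by_cases hQ : (c*(2*u)^2 - a*(1-u^2)^2) = 0
  · have hPPsq : ((1-u^2)*(b*(1+u^2)+(a+c)*(2*u)))^2 = 0 := by
      linear_combination -hD + ((a+c)*(1-u^2)^2 - 2*b*(2*u)*(1+u^2)) * hQ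
    have hPP : ((1-u^2)*(b*(1+u^2)+(a+c)*(2*u))) = 0 :=
      pow_eq_zero_iff (two_ne_zero) |>.mp hPPsq
    refine ⟨wU u, fun y => ?_⟩
    refine ⟨(((1-u^2)*(b*(1+u^2)+(a+c)*(2*u)))*(-((1+u^2) * y 0) + (1-u^2) * y 2 + (2*u) * y 3) + ((a+c)*(1-u^2)^2 - 2*b*(2*u)*(1+u^2))*((1+u^2) * y 1 - (2*u) * y 2 + (1-u^2) * y 3)) / (1+u^2)^2, ?_⟩
    funext i
    have key := key_decomp a b c u y i
    rw [Pi.smul_apply, smul_eq_mul]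
    field_simp
    linear_combination key + xU u i * ((-((1+u^2) * y 0) + (1-u^2) * y 2 + (2*u) * y 3) * hQ + ((1+u^2) * y 1 - (2*u) * y 2 + (1-u^2) * y 3) * hPP)
  · refine ⟨fun i => (c*(2*u)^2 - a*(1-u^2)^2) * xU u i + ((1-u^2)*(b*(1+u^2)+(a+c)*(2*u))) * wU u i, fun y => ?_⟩
    refine ⟨((c*(2*u)^2 - a*(1-u^2)^2)*(-((1+u^2) * y 0) + (1-u^2) * y 2 + (2*u) * y 3) + ((1-u^2)*(b*(1+u^2)+(a+c)*(2*u)))*((1+u^2) * y 1 - (2*u) * y 2 + (1-u^2) * y 3)) / ((c*(2*u)^2 - a*(1-u^2)^2) * (1+u^2)^2), ?_⟩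
    funext i
    have key := key_decomp a b c u y i
    have hrel : (c*(2*u)^2 - a*(1-u^2)^2) * (((1-u^2)*(b*(1+u^2)+(a+c)*(2*u)))*(-((1+u^2) * y 0) + (1-u^2) * y 2 + (2*u) * y 3) + ((a+c)*(1-u^2)^2 - 2*b*(2*u)*(1+u^2))*((1+u^2) * y 1 - (2*u) * y 2 + (1-u^2) * y 3))
        = ((1-u^2)*(b*(1+u^2)+(a+c)*(2*u))) * ((c*(2*u)^2 - a*(1-u^2)^2)*(-((1+u^2) * y 0) + (1-u^2) * y 2 + (2*u) * y 3) + ((1-u^2)*(b*(1+u^2)+(a+c)*(2*u)))*((1+u^2) * y 1 - (2*u) * y 2 + (1-u^2) * y 3)) + ((1+u^2) * y 1 - (2*u) * y 2 + (1-u^2) * y 3) * ((c*(2*u)^2 - a*(1-u^2)^2) * ((a+c)*(1-u^2)^2 - 2*b*(2*u)*(1+u^2)) - ((1-u^2)*(b*(1+u^2)+(a+c)*(2*u)))^2) := by ring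
    rw [Pi.smul_apply, smul_eq_mul]
    rw [div_mul_eq_mul_div, eq_div_iff (mul_ne_zero hQ hp2)]
    linear_combination (c*(2*u)^2 - a*(1-u^2)^2) * key + wU u i * hrel + wU u i * ((1+u^2) * y 1 - (2*u) * y 2 + (1-u^2) * y 3) * hD


lemma not_rank_M1 (b c : ℝ) (hb : b ≠ 0) (hc : c ≠ 0) :
    ¬ RankLeOne !![-c,0,0,c; 0,2*b,-(2*b),0; 0,2*b,-(2*b),0; -c,0,0,c] := by
  rintro ⟨z, hz⟩
  obtain ⟨t0, h0⟩ := hz ![1,0,0,0]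
  obtain ⟨t1, h1⟩ := hz ![0,1,0,0]
  have h00 := congrFun h0 0
  have h10 := congrFun h1 0
  have h11 := congrFun h1 1
  simp [Matrix.mulVec, dotProduct, Fin.sum_univ_four] at h00 h10 h11
  rcases h10 with ht1 | hz0
  · rw [ht1] at h11
    simp at h11
    exact hb (by linarith)
  · rw [hz0] at h00
    simp at h00
    exact hc (by linarith)

lemma not_rank_M2 (a b c : ℝ) (hb : b ≠ 0) (hc : c = 0) :
    ¬ RankLeOne !![a,b,-a,b; b,-(a+c),-b,-(a+c); a,b,-a,b; -b,a+c,b,a+c] := by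
  subst hc
  rintro ⟨z, hz⟩
  obtain ⟨t0, h0⟩ := hz ![1,0,0,0]
  obtain ⟨t1, h1⟩ := hz ![0,1,0,0]
  have h00 := congrFun h0 0
  have h01 := congrFun h0 1
  have h10 := congrFun h1 0
  have h11 := congrFun h1 1
  simp [Matrix.mulVec, dotProduct, Fin.sum_univ_four] at h00 h01 h10 h11
  have k1 : t1*b + t0*a = 0 := by linear_combination t1 * h01 - t0 * h11
  have k2 : t0*b - t1*a = 0 := by linear_combination t0 * h10 - t1 * h00
  have k3 : (t0^2 + t1^2) * b = 0 := by linear_combination t1 * k1 + t0 * k2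
  have hss : t0^2 + t1^2 = 0 := by
    rcases mul_eq_zero.mp k3 with h | h
    · exact h
    · exact absurd h hb
  have ht0 : t0 = 0 := by nlinarith [sq_nonneg t0, sq_nonneg t1]
  rw [ht0] at h01
  simp at h01
  exact hb h01

lemma rankLeOne_N2 (b c : ℝ) (hc : c = 0) :
    RankLeOne !![-c,0,0,c; 0,2*b,-(2*b),0; 0,2*b,-(2*b),0; -c,0,0,c] := by
  subst hc
  refine ⟨![0,1,1,0], fun y => ⟨2*b*y 1 - 2*b*y 2, ?_⟩⟩
  funext i
  fin_cases i <;>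
  · simp [Matrix.mulVec, dotProduct, Fin.sum_univ_four]
    try ring

/-- Section 3.6: no Type Ib model is null Jordan Osserman. -/
theorem type_Ib_not_null_jordan_osserman (a b c : ℝ) (hb : b ≠ 0)
    (A : V4 → V4 → V4 → V4 → ℝ)
    (hA : A = fun x y z w => (1/3) * ((a - b) * AcurvPsi psi1 x y z w
      + (-b - a) * AcurvPsi psi2 x y z w + b * AcurvPsi (psi1 + psi2) x y z w
      + c * AcurvPsi psi3 x y z w)) :
    ¬ NullJordanOsserman A := by
  intro H
  have hune : (![(1:ℝ),0,0,1] : V4) ≠ 0 := by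
    intro h; have h0 := congrFun h 0; simp at h0
  have hnullu : nip ![(1:ℝ),0,0,1] ![(1:ℝ),0,0,1] = 0 := by
    rw [nip_explicit]; norm_num [Matrix.cons_val_two, Matrix.cons_val_three]
  by_cases hc : c = 0
  · have hwne : (![(1:ℝ),0,1,0] : V4) ≠ 0 := by
      intro h; have h0 := congrFun h 0; simp at h0
    have hnullw : nip ![(1:ℝ),0,1,0] ![(1:ℝ),0,1,0] = 0 := by
      rw [nip_explicit]; norm_num [Matrix.cons_val_two, Matrix.cons_val_three]
    have hsim := H ![(1:ℝ),0,1,0] ![(1:ℝ),0,0,1] hwne hune hnullw hnullu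
    rw [jac_e13 a b c A hA, jac_e14 a b c A hA] at hsim
    exact not_rank_M2 a b c hb hc (similar_rankLeOne hsim (rankLeOne_N2 b c hc))
  · obtain ⟨u0, hD⟩ := exists_Dpoly_root a b c
    have hxne : (![1+u0^2, 0, 1-u0^2, 2*u0] : V4) ≠ 0 := by
      intro h
      have h0 := congrFun h 0
      simp at h0
      nlinarith [sq_nonneg u0]
    have hnullx : nip (![1+u0^2, 0, 1-u0^2, 2*u0] : V4) ![1+u0^2, 0, 1-u0^2, 2*u0] = 0 := by
      rw [nip_explicit]
      simp
      ring
    have hsim := H ![(1:ℝ),0,0,1] ![1+u0^2, 0, 1-u0^2, 2*u0] hune hxne hnullu hnullx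
    rw [jac_e14 a b c A hA, jac_at_u a b c u0 A hA] at hsim
    exact not_rank_M1 b c hb hc (similar_rankLeOne hsim (rankLeOne_EM a b c u0 hD))
end
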